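/- Let n ≥ 1, let d⁰ ∈ ℝ^n satisfy d⁰_i ≥ 0 for all i, let α > 0 and Γ ≥ 0, and let U = U(d⁰, α, Γ) be the budgeted uncertainty set. For any subset S ⊆ {1,…,n}, set K = min(|S|, ⌊Γ⌋) and Δ = min(Γ, |S|) − min(⌊Γ⌋, |S|). Then the supremum of ∑_{i ∈ S} d_i over d ∈ U is attained and equals ∑_{i ∈ S} d⁰_i + α · ( ∑_{k=1}^{K} (d⁰)^S_{(k)} + Δ · (d⁰)^S_{(K+1)} ). -/

import Mathlib

open Finset

/-- Makespan of assignment `f` of `n` tasks to `m` machines under durations `d`. -/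
noncomputable def mk {n m : ℕ} (f : Fin n → Fin m) (d : Fin n → ℝ) : ℝ :=
  ⨆ j : Fin m, ∑ i ∈ Finset.univ.filter (fun i => f i = j), d i

/-- Two-machine makespan of allocation `x` under durations `d`. -/
noncomputable def M2 {n : ℕ} (x : Fin n → Bool) (d : Fin n → ℝ) : ℝ :=
  max (∑ i ∈ Finset.univ.filter (fun i => x i = true), d i)
      (∑ i ∈ Finset.univ.filter (fun i => x i = false), d i)

/-- Budgeted uncertainty set `U(d⁰, α, Γ)`. -/
def budgetU {n : ℕ} (d0 : Fin n → ℝ) (α Γ : ℝ) : Set (Fin n → ℝ) :=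
  { d | ∃ u : Fin n → ℝ, (∀ i, u i ∈ Set.Icc (0:ℝ) 1) ∧
        (∀ i, d i = d0 i * (1 + α * u i)) ∧ (∑ i, u i) ≤ Γ }

/-- Static-allocation worst-case makespan on two machines. -/
noncomputable def SA {n : ℕ} (U : Set (Fin n → ℝ)) : ℝ :=
  ⨅ x : Fin n → Bool, sSup ((fun d => M2 x d) '' U)

/-- Perfect-hindsight worst-case makespan on two machines. -/
noncomputable def PH {n : ℕ} (U : Set (Fin n → ℝ)) : ℝ :=
  sSup ((fun d => ⨅ x : Fin n → Bool, M2 x d) '' U)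

/-- `kthLargest S c k` is the `k`-th largest value (1-based) among `(c i)_{i ∈ S}`,
with value `0` when `k > |S|` (in particular `c^S_{(|S|+1)} = 0`). -/
noncomputable def kthLargest {n : ℕ} (S : Finset (Fin n)) (c : Fin n → ℝ) (k : ℕ) : ℝ :=
  ((S.val.map c).sort (· ≥ ·)).getD (k - 1) 0

lemma exists_list_of_map {α β : Type*} [DecidableEq α] (f : α → β) :
    ∀ (L : List β) (s : Multiset α), s.map f = ↑L →
      ∃ l : List α, (↑l : Multiset α) = s ∧ l.map f = L := by
  intro L
  induction L with
  | nil =>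
    intro s hs
    refine ⟨[], ?_, rfl⟩
    have : s = 0 := by simpa [Multiset.map_eq_zero] using hs
    simp [this]
  | cons b L ih =>
    intro s hs
    have hb : b ∈ s.map f := by rw [hs]; simp
    obtain ⟨a, ha, hfa⟩ := Multiset.mem_map.1 hb
    have hse : s = a ::ₘ s.erase a := (Multiset.cons_erase ha).symm
    have h2 : (s.erase a).map f = ↑L := by
      have : f a ::ₘ (s.erase a).map f = b ::ₘ (↑L : Multiset β) := by
        rw [← Multiset.map_cons, ← hse, hs]; rfl
      rw [hfa] at this
      exact (Multiset.cons_inj_right b).1 this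
    obtain ⟨l, hl, hlm⟩ := ih (s.erase a) h2
    refine ⟨a :: l, ?_, by simp [hlm, hfa]⟩
    rw [← Multiset.cons_coe, hl, ← hse]

/-- the worst-case total duration of a subset `S` of tasks over the
budgeted uncertainty set is attained and given in closed form via the sorted nominal
durations. -/
theorem budget_subset_sum_sup
    (n : ℕ) (hn : 1 ≤ n) (d0 : Fin n → ℝ) (hd0 : ∀ i, 0 ≤ d0 i)
    (α Γ : ℝ) (hα : 0 < α) (hΓ : 0 ≤ Γ) (S : Finset (Fin n)) :
    IsGreatest ((fun d => ∑ i ∈ S, d i) '' budgetU d0 α Γ)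
      ((∑ i ∈ S, d0 i) + α *
        ((∑ k ∈ Finset.Icc 1 (min S.card ⌊Γ⌋₊), kthLargest S d0 k) +
          (min Γ (S.card : ℝ) - min (⌊Γ⌋₊ : ℝ) (S.card : ℝ)) *
            kthLargest S d0 (min S.card ⌊Γ⌋₊ + 1))) := by
  classical
  set m := S.card with hm
  set K := min m ⌊Γ⌋₊ with hKdef
  set L : List ℝ := (S.val.map d0).sort (· ≥ ·) with hLdef
  obtain ⟨l, hl, hlmap⟩ := exists_list_of_map d0 L S.val (Multiset.sort_eq _ _).symm
  have hlen : l.length = m := by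
    rw [hm, Finset.card, ← hl, Multiset.coe_card]
  have hLlen : L.length = m := by rw [← hlmap, List.length_map, hlen]
  have hnodup : l.Nodup := by rw [← Multiset.coe_nodup, hl]; exact S.nodup
  have hmem : ∀ i, i ∈ l ↔ i ∈ S := fun i => by
    rw [← Finset.mem_val, ← hl, Multiset.mem_coe]
  have hsorted : L.Pairwise (· ≥ ·) := Multiset.pairwise_sort _ _
  have hLnonneg : ∀ k : ℕ, 0 ≤ L.getD k 0 := by
    intro k
    rw [← hlmap]
    rcases lt_or_ge k (List.map d0 l).length with h | h
    · rw [List.getD_eq_getElem _ _ h, List.getElem_map]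
      exact hd0 _
    · rw [List.getD_eq_default _ _ h]
  set Γ' : ℝ := min Γ (m : ℝ) with hΓ'def
  set Δ : ℝ := Γ' - K with hΔdef
  set t : ℝ := L.getD K 0 with htdef
  set A : ℝ := ∑ j ∈ Finset.range K, L.getD j 0 with hAdef
  have hKm : K ≤ m := min_le_left _ _
  have hKΓ : (K : ℝ) ≤ Γ :=
    le_trans (by exact_mod_cast min_le_right m ⌊Γ⌋₊ : (K:ℝ) ≤ (⌊Γ⌋₊:ℝ)) (Nat.floor_le hΓ)
  have hΔ0 : 0 ≤ Δ := sub_nonneg.2 (le_min hKΓ (by exact_mod_cast hKm))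
  have hΔ1 : Δ ≤ 1 := by
    rcases le_total ⌊Γ⌋₊ m with h | h
    · have hK : K = ⌊Γ⌋₊ := min_eq_right h
      have h1 : Γ < (⌊Γ⌋₊ : ℝ) + 1 := Nat.lt_floor_add_one Γ
      have h2 : Γ' ≤ Γ := min_le_left _ _
      rw [hΔdef, hK]; linarith
    · have hK : K = m := min_eq_left h
      have h2 : Γ' ≤ (m : ℝ) := min_le_right _ _
      rw [hΔdef, hK]; linarith
  have hKmΔ : K = m → Δ = 0 := by
    intro h
    have hm' : m ≤ ⌊Γ⌋₊ := min_eq_left_iff.1 (hKdef.symm.trans h)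
    have h1 : (m : ℝ) ≤ Γ := le_trans (by exact_mod_cast hm') (Nat.floor_le hΓ)
    rw [hΔdef, hΓ'def, min_eq_right h1, h]
    simp
  have hkth : ∀ k : ℕ, kthLargest S d0 (k + 1) = L.getD k 0 := by
    intro k; simp [kthLargest, ← hLdef]
  have hsumIcc : ∑ k ∈ Finset.Icc 1 K, kthLargest S d0 k = A := by
    rw [← Finset.Ico_add_one_right_eq_Icc, Finset.sum_Ico_eq_sum_range]
    refine Finset.sum_congr (by norm_num) fun j _ => by rw [add_comm, hkth]
  have hreindex : ∀ g : Fin n → ℝ, ∑ i ∈ S, g i = ∑ k : Fin l.length, g (l.get k) := by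
    intro g
    rw [Finset.sum, ← hl, Multiset.map_coe, Multiset.sum_coe]
    conv_lhs => rw [← List.ofFn_get l, List.map_ofFn, List.sum_ofFn]
    rfl
  have hval : ∀ k : Fin l.length, d0 (l.get k) = L.getD (k : ℕ) 0 := by
    intro k
    rw [← hlmap, List.getD_eq_getElem _ _ (by simpa using k.isLt), List.getElem_map,
      List.get_eq_getElem]
  have hsort' : ∀ a b : ℕ, a ≤ b → (hb : b < L.length) → L.getD b 0 ≤ L.getD a 0 := by
    intro a b hab hb
    rw [List.getD_eq_getElem _ _ hb, List.getD_eq_getElem _ _ (lt_of_le_of_lt hab hb)]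
    exact hsorted.rel_get_of_le (by exact hab : (⟨a, _⟩ : Fin L.length) ≤ ⟨b, hb⟩)
  have ht0 : 0 ≤ t := hLnonneg K
  have htle : ∀ k : ℕ, k < K → t ≤ L.getD k 0 := by
    intro k hk
    rcases lt_or_eq_of_le hKm with h | h
    · exact hsort' k K hk.le (by rw [hLlen]; exact h)
    · rw [htdef, List.getD_eq_default _ _ (by rw [hLlen, ← h])]
      exact hLnonneg k
  have htge : ∀ k : ℕ, K ≤ k → L.getD k 0 ≤ t := by
    intro k hk
    rcases lt_or_ge k L.length with h | h
    · exact hsort' K k hk h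
    · rw [List.getD_eq_default _ _ h]; exact hLnonneg K
  have hfil : (Finset.range m).filter (fun k => k < K) = Finset.range K := by
    ext k; simp only [Finset.mem_filter, Finset.mem_range]; omega
  have hsumA : ∀ f : ℕ → ℝ,
      ∑ k ∈ Finset.range m, (if k < K then f k else 0) = ∑ k ∈ Finset.range K, f k := by
    intro f; rw [← Finset.sum_filter, hfil]
  have hsum2 : ∀ f : ℕ → ℝ,
      ∑ k ∈ Finset.range m, (if k = K then f k else 0) = (if K < m then f K else 0) := by
    intro f
    rw [Finset.sum_ite_eq' (Finset.range m) K f]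
    simp
  have expand : ∀ v : Fin n → ℝ,
      ∑ i ∈ S, d0 i * (1 + α * v i) = (∑ i ∈ S, d0 i) + α * ∑ i ∈ S, d0 i * v i := by
    intro v
    rw [Finset.mul_sum, ← Finset.sum_add_distrib]
    exact Finset.sum_congr rfl fun i _ => by ring
  have hKcast : min ((⌊Γ⌋₊ : ℕ) : ℝ) ((m : ℕ) : ℝ) = (K : ℝ) := by
    rw [hKdef, Nat.cast_min]; exact min_comm _ _
  have hcast : Γ' - min ((⌊Γ⌋₊ : ℕ) : ℝ) ((m : ℕ) : ℝ) = Δ := by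
    rw [hKcast]
  constructor
  · -- membership
    set u : Fin n → ℝ := fun i =>
      if i ∈ l then (if l.idxOf i < K then 1 else if l.idxOf i = K then Δ else 0) else 0
      with hudef
    have hu01 : ∀ i, u i ∈ Set.Icc (0:ℝ) 1 := by
      intro i
      rw [hudef]
      dsimp only
      rw [Set.mem_Icc]
      split_ifs <;> constructor <;> first | exact hΔ0 | exact hΔ1 | norm_num
    have huget : ∀ k : Fin l.length, u (l.get k) =
        (if (k : ℕ) < K then 1 else if (k : ℕ) = K then Δ else 0) := by
      intro k
      have h1 : l.get k ∈ l := List.get_mem l k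
      have h2 : l.idxOf (l.get k) = (k : ℕ) := by
        rw [List.get_eq_getElem]; exact hnodup.idxOf_getElem _ _
      rw [hudef]; dsimp only; rw [if_pos h1, h2]
    have husumS : ∑ i ∈ S, u i = (K : ℝ) + Δ := by
      have hterm : ∀ k : ℕ, (if k < K then (1:ℝ) else if k = K then Δ else 0) =
          (if k < K then (1:ℝ) else 0) + (if k = K then Δ else 0) := by
        intro k; split_ifs <;> first | omega | norm_num
      have e1 : ∑ k ∈ Finset.range m, (if k < K then (1:ℝ) else 0) = K := by
        rw [hsumA (fun _ => (1:ℝ)), Finset.sum_const, Finset.card_range, nsmul_eq_mul, mul_one]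
      have e2 : ∑ k ∈ Finset.range m, (if k = K then Δ else 0) = Δ := by
        rw [hsum2 (fun _ => Δ)]
        rcases lt_or_eq_of_le hKm with h | h
        · rw [if_pos h]
        · rw [if_neg (by omega), hKmΔ h]
      calc ∑ i ∈ S, u i = ∑ k : Fin l.length, u (l.get k) := hreindex u
        _ = ∑ k : Fin l.length, (if (k:ℕ) < K then (1:ℝ) else if (k:ℕ) = K then Δ else 0) :=
            Finset.sum_congr rfl fun k _ => huget k
        _ = ∑ k ∈ Finset.range l.length, (if k < K then (1:ℝ) else if k = K then Δ else 0) :=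
            Fin.sum_univ_eq_sum_range (fun k => if k < K then (1:ℝ) else if k = K then Δ else 0)
              l.length
        _ = (K : ℝ) + Δ := by
            rw [hlen, Finset.sum_congr rfl fun k _ => hterm k, Finset.sum_add_distrib, e1, e2]
    have huniv : ∑ i : Fin n, u i = ∑ i ∈ S, u i := by
      refine (Finset.sum_subset (Finset.subset_univ S) fun i _ hi => ?_).symm
      rw [hudef]; dsimp only; rw [if_neg (fun h => hi ((hmem i).1 h))]
    have husum : ∑ i : Fin n, u i ≤ Γ := by
      rw [huniv, husumS]
      have hKΔ : (K : ℝ) + Δ = Γ' := by rw [hΔdef]; ring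
      rw [hKΔ]; exact min_le_left _ _
    have hterm : ∀ k : ℕ,
        L.getD k 0 * (if k < K then (1:ℝ) else if k = K then Δ else 0) =
        (if k < K then L.getD k 0 else 0) + (if k = K then Δ * L.getD k 0 else 0) := by
      intro k; split_ifs <;> first | omega | ring
    have hXval : ∑ i ∈ S, d0 i * u i = A + Δ * t := by
      calc ∑ i ∈ S, d0 i * u i
          = ∑ k : Fin l.length, d0 (l.get k) * u (l.get k) := hreindex _
        _ = ∑ k : Fin l.length,
              (L.getD (k:ℕ) 0 * (if (k:ℕ) < K then (1:ℝ) else if (k:ℕ) = K then Δ else 0)) :=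
            Finset.sum_congr rfl fun k _ => by rw [hval k, huget k]
        _ = ∑ k ∈ Finset.range l.length,
              (L.getD k 0 * (if k < K then (1:ℝ) else if k = K then Δ else 0)) :=
            Fin.sum_univ_eq_sum_range
              (fun k => L.getD k 0 * (if k < K then (1:ℝ) else if k = K then Δ else 0)) l.length
        _ = A + Δ * t := by
            rw [hlen, Finset.sum_congr rfl fun k _ => hterm k, Finset.sum_add_distrib,
              hsumA (fun k => L.getD k 0), hsum2 (fun k => Δ * L.getD k 0), ← hAdef]
            rcases lt_or_eq_of_le hKm with h | h
            · rw [if_pos h, ← htdef]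
            · rw [if_neg (by omega), hKmΔ h, zero_mul, add_zero]
    refine ⟨fun i => d0 i * (1 + α * u i), ⟨u, hu01, fun i => rfl, husum⟩, ?_⟩
    show ∑ i ∈ S, d0 i * (1 + α * u i) = _
    rw [expand u, hsumIcc, hkth K, hcast, ← htdef, hXval]
  · -- upper bound
    rintro x ⟨d, ⟨u, hu01, hdu, husum⟩, rfl⟩
    have hdeq : ∑ i ∈ S, d i = (∑ i ∈ S, d0 i) + α * ∑ i ∈ S, d0 i * u i := by
      rw [← expand u]; exact Finset.sum_congr rfl fun i _ => hdu i
    show ∑ i ∈ S, d i ≤ _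
    rw [hdeq, hsumIcc, hkth K, hcast, ← htdef]
    have hsS : ∑ i ∈ S, u i ≤ Γ' := by
      refine le_min ?_ ?_
      · refine le_trans ?_ husum
        exact Finset.sum_le_sum_of_subset_of_nonneg (Finset.subset_univ S)
          fun i _ _ => (hu01 i).1
      · calc ∑ i ∈ S, u i ≤ ∑ i ∈ S, 1 := Finset.sum_le_sum fun i _ => (hu01 i).2
          _ = (m : ℝ) := by rw [Finset.sum_const, nsmul_eq_mul, mul_one, hm]
    have step2 : ∑ i ∈ S, max (d0 i - t) 0 = A - K * t := by
      have hterm : ∀ k : Fin l.length,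
          max (d0 (l.get k) - t) 0 = (if (k:ℕ) < K then L.getD (k:ℕ) 0 - t else 0) := by
        intro k
        rw [hval k]
        by_cases hk : (k : ℕ) < K
        · rw [if_pos hk, max_eq_left (by have := htle _ hk; linarith)]
        · rw [if_neg hk, max_eq_right (by have := htge _ (le_of_not_gt hk); linarith)]
      calc ∑ i ∈ S, max (d0 i - t) 0
          = ∑ k : Fin l.length, max (d0 (l.get k) - t) 0 := hreindex _
        _ = ∑ k : Fin l.length, (if (k:ℕ) < K then L.getD (k:ℕ) 0 - t else 0) :=
            Finset.sum_congr rfl fun k _ => hterm k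
        _ = ∑ k ∈ Finset.range l.length, (if k < K then L.getD k 0 - t else 0) :=
            Fin.sum_univ_eq_sum_range (fun k => if k < K then L.getD k 0 - t else 0) l.length
        _ = ∑ k ∈ Finset.range K, (L.getD k 0 - t) := by rw [hlen]; exact hsumA _
        _ = A - K * t := by
            rw [Finset.sum_sub_distrib, Finset.sum_const, Finset.card_range,
              nsmul_eq_mul, ← hAdef]
    have step1 : ∑ i ∈ S, d0 i * u i ≤ (∑ i ∈ S, max (d0 i - t) 0) + t * Γ' := by
      calc ∑ i ∈ S, d0 i * u i ≤ ∑ i ∈ S, (max (d0 i - t) 0 + t * u i) := by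
            refine Finset.sum_le_sum fun i _ => ?_
            obtain ⟨h0, h1⟩ := hu01 i
            rcases le_total (d0 i) t with h | h
            · have h3 : d0 i * u i ≤ t * u i := mul_le_mul_of_nonneg_right h h0
              have h4 := le_max_right (d0 i - t) 0
              linarith
            · have h2 : (d0 i - t) * u i ≤ (d0 i - t) * 1 :=
                mul_le_mul_of_nonneg_left h1 (by linarith)
              have h4 := le_max_left (d0 i - t) 0
              nlinarith
        _ = (∑ i ∈ S, max (d0 i - t) 0) + t * ∑ i ∈ S, u i := by
              rw [Finset.sum_add_distrib, Finset.mul_sum]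
        _ ≤ _ := by
              have := mul_le_mul_of_nonneg_left hsS ht0
              linarith
    have hX : ∑ i ∈ S, d0 i * u i ≤ A + Δ * t := by
      rw [step2] at step1
      have : t * Γ' = t * (Δ + K) := by rw [hΔdef]; ring
      rw [this] at step1
      linarith
    have := mul_le_mul_of_nonneg_left hX hα.le
    linarith
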